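/- Let p = (p₀, p₁, p₂) be a probability vector with strictly positive entries and let u₁, u₂ ∈ ℝ. Then there exists an absolutely continuous probability measure μ on ℝ² such that μ(Q₀) = p₀, μ(Q₁) = p₁, μ(Q₂) = p₂, where Q₀ = {(e₁,e₂) : e₁ < −u₁, e₂ < −u₂}, Q₁ = {(e₁,e₂) : e₁ > −u₁, e₁ − e₂ > u₂ − u₁}, Q₂ = {(e₁,e₂) : e₂ > −u₂, e₁ − e₂ < u₂ − u₁}. -/
import Mathlib


open MeasureTheory Set

lemma vol_sq (a b : ℝ) :
    volume (Ioo a (a+1) ×ˢ Ioo b (b+1)) = 1 := by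
  rw [MeasureTheory.Measure.volume_eq_prod, Measure.prod_prod, Real.volume_Ioo,
    Real.volume_Ioo]
  simp

theorem stmt_17 (p₀ p₁ p₂ : ℝ) (h₀ : 0 < p₀) (h₁ : 0 < p₁) (h₂ : 0 < p₂)
    (hsum : p₀ + p₁ + p₂ = 1) (u₁ u₂ : ℝ) :
    ∃ μ : Measure (ℝ × ℝ),
      IsProbabilityMeasure μ ∧ μ ≪ (volume : Measure (ℝ × ℝ)) ∧
      μ {e : ℝ × ℝ | e.1 < -u₁ ∧ e.2 < -u₂} = ENNReal.ofReal p₀ ∧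
      μ {e : ℝ × ℝ | -u₁ < e.1 ∧ u₂ - u₁ < e.1 - e.2} = ENNReal.ofReal p₁ ∧
      μ {e : ℝ × ℝ | -u₂ < e.2 ∧ e.1 - e.2 < u₂ - u₁} = ENNReal.ofReal p₂ := by
  set S₀ : Set (ℝ × ℝ) := Ioo (-u₁-2) (-u₁-2+1) ×ˢ Ioo (-u₂-2) (-u₂-2+1) with hS₀
  set S₁ : Set (ℝ × ℝ) := Ioo (-u₁+1) (-u₁+1+1) ×ˢ Ioo (-u₂-2) (-u₂-2+1) with hS₁
  set S₂ : Set (ℝ × ℝ) := Ioo (-u₁-2) (-u₁-2+1) ×ˢ Ioo (-u₂+1) (-u₂+1+1) with hS₂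
  have mS₀ : MeasurableSet S₀ := (measurableSet_Ioo).prod measurableSet_Ioo
  have mS₁ : MeasurableSet S₁ := (measurableSet_Ioo).prod measurableSet_Ioo
  have mS₂ : MeasurableSet S₂ := (measurableSet_Ioo).prod measurableSet_Ioo
  have v₀ : volume S₀ = 1 := vol_sq _ _
  have v₁ : volume S₁ = 1 := vol_sq _ _
  have v₂ : volume S₂ = 1 := vol_sq _ _
  set μ : Measure (ℝ × ℝ) :=
    ENNReal.ofReal p₀ • volume.restrict S₀ + ENNReal.ofReal p₁ • volume.restrict S₁ +
      ENNReal.ofReal p₂ • volume.restrict S₂ with hμ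
  have happ : ∀ A : Set (ℝ × ℝ),
      μ A = ENNReal.ofReal p₀ * volume (A ∩ S₀) + ENNReal.ofReal p₁ * volume (A ∩ S₁) +
        ENNReal.ofReal p₂ * volume (A ∩ S₂) := by
    intro A
    simp [hμ, Measure.restrict_apply' mS₀, Measure.restrict_apply' mS₁,
      Measure.restrict_apply' mS₂]
  refine ⟨μ, ?_, ?_, ?_, ?_, ?_⟩
  · constructor
    rw [happ]
    simp only [Set.univ_inter]
    rw [v₀, v₁, v₂, mul_one, mul_one, mul_one,
      ← ENNReal.ofReal_add h₀.le h₁.le, ← ENNReal.ofReal_add (by linarith) h₂.le, hsum,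
      ENNReal.ofReal_one]
  · intro s hs
    rw [happ]
    have h0 : ∀ T : Set (ℝ × ℝ), volume (s ∩ T) = 0 :=
      fun T => le_antisymm (le_trans (measure_mono (Set.inter_subset_left)) hs.le) bot_le
    simp [h0]
  · rw [happ]
    have e₀ : {e : ℝ × ℝ | e.1 < -u₁ ∧ e.2 < -u₂} ∩ S₀ = S₀ := by
      apply Set.inter_eq_self_of_subset_right
      rintro ⟨x, y⟩ ⟨⟨hx1, hx2⟩, hy1, hy2⟩
      exact ⟨by dsimp; linarith, by dsimp; linarith⟩
    have e₁ : {e : ℝ × ℝ | e.1 < -u₁ ∧ e.2 < -u₂} ∩ S₁ = ∅ := by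
      ext ⟨x, y⟩
      simp only [Set.mem_inter_iff, Set.mem_setOf_eq, Set.mem_empty_iff_false, iff_false,
        hS₁, Set.mem_prod, Set.mem_Ioo]
      rintro ⟨⟨h1, h2⟩, ⟨h3, h4⟩, _⟩; linarith
    have e₂ : {e : ℝ × ℝ | e.1 < -u₁ ∧ e.2 < -u₂} ∩ S₂ = ∅ := by
      ext ⟨x, y⟩
      simp only [Set.mem_inter_iff, Set.mem_setOf_eq, Set.mem_empty_iff_false, iff_false,
        hS₂, Set.mem_prod, Set.mem_Ioo]
      rintro ⟨⟨h1, h2⟩, _, ⟨h3, h4⟩⟩; linarith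
    rw [e₀, e₁, e₂, v₀]
    simp
  · rw [happ]
    have e₀ : {e : ℝ × ℝ | -u₁ < e.1 ∧ u₂ - u₁ < e.1 - e.2} ∩ S₀ = ∅ := by
      ext ⟨x, y⟩
      simp only [Set.mem_inter_iff, Set.mem_setOf_eq, Set.mem_empty_iff_false, iff_false,
        hS₀, Set.mem_prod, Set.mem_Ioo]
      rintro ⟨⟨h1, h2⟩, ⟨h3, h4⟩, _⟩; linarith
    have e₁ : {e : ℝ × ℝ | -u₁ < e.1 ∧ u₂ - u₁ < e.1 - e.2} ∩ S₁ = S₁ := by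
      apply Set.inter_eq_self_of_subset_right
      rintro ⟨x, y⟩ ⟨⟨hx1, hx2⟩, hy1, hy2⟩
      exact ⟨by dsimp; linarith, by dsimp; linarith⟩
    have e₂ : {e : ℝ × ℝ | -u₁ < e.1 ∧ u₂ - u₁ < e.1 - e.2} ∩ S₂ = ∅ := by
      ext ⟨x, y⟩
      simp only [Set.mem_inter_iff, Set.mem_setOf_eq, Set.mem_empty_iff_false, iff_false,
        hS₂, Set.mem_prod, Set.mem_Ioo]
      rintro ⟨⟨h1, h2⟩, ⟨h3, h4⟩, ⟨h5, h6⟩⟩; linarith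
    rw [e₀, e₁, e₂, v₁]
    simp
  · rw [happ]
    have e₀ : {e : ℝ × ℝ | -u₂ < e.2 ∧ e.1 - e.2 < u₂ - u₁} ∩ S₀ = ∅ := by
      ext ⟨x, y⟩
      simp only [Set.mem_inter_iff, Set.mem_setOf_eq, Set.mem_empty_iff_false, iff_false,
        hS₀, Set.mem_prod, Set.mem_Ioo]
      rintro ⟨⟨h1, h2⟩, _, ⟨h3, h4⟩⟩; linarith
    have e₁ : {e : ℝ × ℝ | -u₂ < e.2 ∧ e.1 - e.2 < u₂ - u₁} ∩ S₁ = ∅ := by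
      ext ⟨x, y⟩
      simp only [Set.mem_inter_iff, Set.mem_setOf_eq, Set.mem_empty_iff_false, iff_false,
        hS₁, Set.mem_prod, Set.mem_Ioo]
      rintro ⟨⟨h1, h2⟩, ⟨h3, h4⟩, ⟨h5, h6⟩⟩; linarith
    have e₂ : {e : ℝ × ℝ | -u₂ < e.2 ∧ e.1 - e.2 < u₂ - u₁} ∩ S₂ = S₂ := by
      apply Set.inter_eq_self_of_subset_right
      rintro ⟨x, y⟩ ⟨⟨hx1, hx2⟩, hy1, hy2⟩
      exact ⟨by dsimp; linarith, by dsimp; linarith⟩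
    rw [e₀, e₁, e₂, v₂]
    simp
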